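/- Let n ≥ 1 and let G be the tree on 2n + 2 vertices consisting of two stars with centers c and c′ and leaves x_1,…,x_n and y_1,…,y_n respectively, together with the edge {c, c′}; let κ color each pair of edges {c, x_i} and {c′, y_i} with color i (for 1 ≤ i ≤ n) and the edge {c, c′} with color n + 1. Then the coloring group 𝔊_κ is isomorphic to the hyperoctahedral group C₂ ≀ S_{n+1}, i.e. the wreath product ((Z/2Z)^{n+1}) ⋊ S_{n+1} with S_{n+1} permuting the coordinates, a group of order 2^{n+1}·(n+1)!. -/

import Mathlib

open scoped Classical

/-- A proper edge coloring of a finite simple graph `G` with colors `{1, …, k}`: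
it assigns colors in `{1, …, k}` to edges, is surjective onto `{1, …, k}`, and
incident edges receive distinct colors. -/
def IsProperEdgeColoring {V : Type*} (G : SimpleGraph V) (k : ℕ) (κ : Sym2 V → ℕ) : Prop :=
  (∀ e ∈ G.edgeSet, κ e ∈ Finset.Icc 1 k) ∧
  (∀ a ∈ Finset.Icc 1 k, ∃ e ∈ G.edgeSet, κ e = a) ∧
  (∀ u v w : V, G.Adj u v → G.Adj u w → v ≠ w → κ s(u, v) ≠ κ s(u, w))
/-- `IsToggle G κ a τ` says that the permutation `τ` is the product of the
transpositions `(i j)` over all edges `{i,j}` of `G` colored `a`: it swaps the two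
endpoints of every edge colored `a` and fixes all other vertices. -/
def IsToggle {V : Type*} (G : SimpleGraph V) (κ : Sym2 V → ℕ) (a : ℕ) (τ : Equiv.Perm V) : Prop :=
  ∀ v w : V, v ≠ w → (τ v = w ↔ G.Adj v w ∧ κ s(v, w) = a)
/-- The coloring group `𝔊_κ`: the subgroup of `Sym(V)` generated by the
permutations `τ_1, …, τ_k` associated to the colors `1, …, k`. -/
def coloringGroup {V : Type*} (G : SimpleGraph V) (k : ℕ) (κ : Sym2 V → ℕ) :
    Subgroup (Equiv.Perm V) :=
  Subgroup.closure { τ : Equiv.Perm V | ∃ a : ℕ, 1 ≤ a ∧ a ≤ k ∧ IsToggle G κ a τ }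
/-- The "negation" permutation of `Fin m × Bool` (the set of `m` letters with signs),
flipping the sign of every letter. The hyperoctahedral group `C₂ ≀ S_m` of signed
permutations of `m` letters is realized as the centralizer of this permutation in
`Sym(Fin m × Bool)`. -/
def negPerm (m : ℕ) : Equiv.Perm (Fin m × Bool) :=
  Equiv.prodCongr (Equiv.refl (Fin m)) ⟨Bool.not, Bool.not, Bool.not_not, Bool.not_not⟩

/-- The tree on `2n + 2` vertices consisting of two stars with centers `(false, 0)` and
`(true, 0)` and leaves `(b, i)` for `1 ≤ i ≤ n`, joined by the edge between the two
centers. -/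
def twoStars (n : ℕ) : SimpleGraph (Bool × Fin (n + 1)) :=
  SimpleGraph.fromRel fun u v =>
    (u.2 = 0 ∧ v.2 ≠ 0 ∧ u.1 = v.1) ∨ (u.2 = 0 ∧ v.2 = 0 ∧ u.1 ≠ v.1)

/-- The coloring of `twoStars n` giving the pair of edges `{(b,0), (b,i)}` (for
`b = false, true`) the color `i` for each `1 ≤ i ≤ n`, and the central edge
`{(false,0), (true,0)}` the color `n + 1`. -/
def twoStarsColoring (n : ℕ) : Sym2 (Bool × Fin (n + 1)) → ℕ :=
  Sym2.lift
    ⟨fun u v => if max u.2.val v.2.val = 0 then n + 1 else max u.2.val v.2.val,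
     fun u v => by simp only []; rw [max_comm]⟩

namespace Stmt19

open Equiv

variable {n : ℕ}

/-- bundled `permCongr` as a `MulEquiv`. -/
def permMulEquiv {α β : Type*} (e : α ≃ β) : Equiv.Perm α ≃* Equiv.Perm β :=
  { e.permCongr with
    map_mul' := fun p q => by
      ext x
      simp [Equiv.permCongr_apply, Equiv.Perm.mul_apply] }

/-- flip of the Bool coordinate. -/
def flipP (n : ℕ) : Equiv.Perm (Bool × Fin (n + 1)) :=
  Equiv.prodCongr ⟨Bool.not, Bool.not, Bool.not_not, Bool.not_not⟩ (Equiv.refl _)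

@[simp] lemma flipP_apply (p : Bool × Fin (n + 1)) : flipP n p = (!p.1, p.2) := rfl

/-- lift a permutation of `Fin (n+1)` to one of `Bool × Fin (n+1)`. -/
def liftP (n : ℕ) (π : Equiv.Perm (Fin (n + 1))) : Equiv.Perm (Bool × Fin (n + 1)) :=
  Equiv.prodCongr (Equiv.refl Bool) π

@[simp] lemma liftP_apply (π : Equiv.Perm (Fin (n + 1))) (p : Bool × Fin (n + 1)) :
    liftP n π p = (p.1, π p.2) := rfl

lemma liftP_mul (π ρ : Equiv.Perm (Fin (n + 1))) :
    liftP n (π * ρ) = liftP n π * liftP n ρ := by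
  ext p <;> simp [Equiv.Perm.mul_apply]

lemma liftP_one : liftP n 1 = 1 := by ext p <;> simp

lemma liftP_inv (π : Equiv.Perm (Fin (n + 1))) : liftP n π⁻¹ = (liftP n π)⁻¹ := by
  rw [eq_inv_iff_mul_eq_one, ← liftP_mul, inv_mul_cancel, liftP_one]

def sgen (n : ℕ) (i : Fin (n + 1)) : Equiv.Perm (Bool × Fin (n + 1)) :=
  Equiv.swap (false, 0) (false, i) * Equiv.swap (true, 0) (true, i)

def cgen (n : ℕ) : Equiv.Perm (Bool × Fin (n + 1)) := Equiv.swap (false, 0) (true, 0)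

def sflip (n : ℕ) (j : Fin (n + 1)) : Equiv.Perm (Bool × Fin (n + 1)) :=
  Equiv.swap (false, j) (true, j)

lemma sgen_eq (i : Fin (n + 1)) : sgen n i = liftP n (Equiv.swap 0 i) := by
  ext ⟨b, j⟩
  · cases b <;>
      simp [sgen, Equiv.Perm.mul_apply, Equiv.swap_apply_def, Prod.ext_iff] <;>
      split_ifs <;> simp_all
  · cases b <;>
      simp [sgen, Equiv.Perm.mul_apply, Equiv.swap_apply_def, Prod.ext_iff] <;>
      split_ifs <;> simp_all

@[simp] lemma sgen_apply (i : Fin (n + 1)) (p : Bool × Fin (n + 1)) :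
    sgen n i p = (p.1, Equiv.swap 0 i p.2) := by rw [sgen_eq]; rfl

@[simp] lemma sflip_apply (j : Fin (n + 1)) (p : Bool × Fin (n + 1)) :
    sflip n j p = if p.2 = j then (!p.1, p.2) else p := by
  obtain ⟨b, k⟩ := p
  by_cases h : k = j
  · subst h
    cases b <;> simp [sflip, Equiv.swap_apply_def]
  · simp [sflip, Equiv.swap_apply_def, Prod.ext_iff, h]

def gens (n : ℕ) : Set (Equiv.Perm (Bool × Fin (n + 1))) :=
  {σ | ∃ i : Fin (n + 1), i ≠ 0 ∧ σ = sgen n i} ∪ {cgen n}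

/-- sign-change permutation given by a pattern `u`. -/
def Dperm (n : ℕ) (u : Fin (n + 1) → Bool) : Equiv.Perm (Bool × Fin (n + 1)) :=
  ⟨fun p => (xor (u p.2) p.1, p.2), fun p => (xor (u p.2) p.1, p.2),
   fun p => by simp [Bool.xor_assoc], fun p => by simp [Bool.xor_assoc]⟩

@[simp] lemma Dperm_apply (u : Fin (n + 1) → Bool) (p : Bool × Fin (n + 1)) :
    Dperm n u p = (xor (u p.2) p.1, p.2) := rfl

lemma sgen_mem (i : Fin (n + 1)) (hi : i ≠ 0) :
    sgen n i ∈ Subgroup.closure (gens n) :=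
  Subgroup.subset_closure (Or.inl ⟨i, hi, rfl⟩)

lemma cgen_mem : cgen n ∈ Subgroup.closure (gens n) :=
  Subgroup.subset_closure (Or.inr rfl)

lemma liftswap_mem (x y : Fin (n + 1)) :
    liftP n (Equiv.swap x y) ∈ Subgroup.closure (gens n) := by
  by_cases hxy : x = y
  · subst hxy
    have : liftP n (Equiv.swap x x) = 1 := by
      rw [Equiv.swap_self]; ext p <;> simp [liftP]
    rw [this]; exact Subgroup.one_mem _
  by_cases hx : x = 0
  · subst hx
    rw [← sgen_eq]
    exact sgen_mem y (by rintro rfl; exact hxy rfl)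
  by_cases hy : y = 0
  · subst hy
    rw [Equiv.swap_comm, ← sgen_eq]
    exact sgen_mem x hx
  · have key : Equiv.swap x y =
        Equiv.swap 0 x * Equiv.swap 0 y * (Equiv.swap 0 x)⁻¹ := by
      have h := Equiv.swap_apply_apply (Equiv.swap 0 x) 0 y
      rw [Equiv.swap_apply_left] at h
      rw [Equiv.swap_apply_of_ne_of_ne (a := 0) (b := x) hy (fun h' => hxy h'.symm)] at h
      exact h
    rw [key, liftP_mul, liftP_mul, liftP_inv]
    simp only [← sgen_eq]
    exact Subgroup.mul_mem _ (Subgroup.mul_mem _ (sgen_mem x hx) (sgen_mem y hy))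
      (Subgroup.inv_mem _ (sgen_mem x hx))

lemma liftP_mem (π : Equiv.Perm (Fin (n + 1))) :
    liftP n π ∈ Subgroup.closure (gens n) := by
  refine Equiv.Perm.swap_induction_on π ?_ ?_
  · rw [liftP_one]; exact Subgroup.one_mem _
  · intro f x y hxy ih
    rw [liftP_mul]
    exact Subgroup.mul_mem _ (liftswap_mem x y) ih

lemma sflip_zero : sflip n 0 = cgen n := rfl

lemma sflip_mem (j : Fin (n + 1)) : sflip n j ∈ Subgroup.closure (gens n) := by
  by_cases hj : j = 0
  · subst hj; rw [sflip_zero]; exact cgen_mem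
  · have key : sflip n j = sgen n j * sflip n 0 * (sgen n j)⁻¹ := by
      have := Equiv.swap_apply_apply (sgen n j) (false, (0 : Fin (n+1))) (true, 0)
      have h1 : sgen n j (false, (0 : Fin (n+1))) = (false, j) := by simp
      have h2 : sgen n j (true, (0 : Fin (n+1))) = (true, j) := by simp
      rw [h1, h2] at this
      exact this
    rw [key]
    exact Subgroup.mul_mem _ (Subgroup.mul_mem _ (sgen_mem j hj) cgen_mem)
      (Subgroup.inv_mem _ (sgen_mem j hj))

lemma Dperm_finset_mem (t : Finset (Fin (n + 1))) :
    Dperm n (fun j => decide (j ∈ t)) ∈ Subgroup.closure (gens n) := by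
  classical
  refine Finset.induction_on t ?_ ?_
  · have : Dperm n (fun j => decide (j ∈ (∅ : Finset (Fin (n+1))))) = 1 := by
      ext p <;> simp
    rw [this]; exact Subgroup.one_mem _
  · intro a t ha ih
    have key : Dperm n (fun j => decide (j ∈ insert a t)) =
        sflip n a * Dperm n (fun j => decide (j ∈ t)) := by
      ext ⟨b, k⟩
      · by_cases hk : k = a
        · subst hk
          simp [Equiv.Perm.mul_apply, ha]
        · simp [Equiv.Perm.mul_apply, hk, Finset.mem_insert]
      · by_cases hk : k = a <;> simp [Equiv.Perm.mul_apply, hk]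
    rw [key]
    exact Subgroup.mul_mem _ (sflip_mem a) ih

lemma Dperm_mem (u : Fin (n + 1) → Bool) :
    Dperm n u ∈ Subgroup.closure (gens n) := by
  have : u = fun j => decide (j ∈ Finset.univ.filter (fun j => u j = true)) := by
    funext j; by_cases h : u j = true <;> simp [h]
  rw [this]
  exact Dperm_finset_mem _

lemma gens_subset_centralizer :
    gens n ⊆ ↑(Subgroup.centralizer {flipP n}) := by
  rintro σ (⟨i, hi, rfl⟩ | hσ)
  · rw [SetLike.mem_coe, Subgroup.mem_centralizer_singleton_iff]
    apply Equiv.ext; intro p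
    simp [Equiv.Perm.mul_apply]
  · rw [Set.mem_singleton_iff] at hσ; subst hσ
    rw [SetLike.mem_coe, Subgroup.mem_centralizer_singleton_iff]
    apply Equiv.ext; intro p
    rw [show cgen n = sflip n 0 from rfl]
    simp only [Equiv.Perm.mul_apply, sflip_apply, flipP_apply]
    by_cases h : p.2 = 0 <;> simp [h]

lemma centralizer_le_closure :
    Subgroup.centralizer {flipP n} ≤ Subgroup.closure (gens n) := by
  intro σ hσ
  rw [Subgroup.mem_centralizer_singleton_iff] at hσ
  have key : ∀ b (j : Fin (n + 1)), σ (!b, j) = (!(σ (b, j)).1, (σ (b, j)).2) := by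
    intro b j
    calc σ (!b, j) = (σ * flipP n) (b, j) := by simp [Equiv.Perm.mul_apply]
    _ = (flipP n * σ) (b, j) := by rw [← hσ]
    _ = (!(σ (b, j)).1, (σ (b, j)).2) := by simp [Equiv.Perm.mul_apply]
  have keyT : ∀ j : Fin (n + 1), σ (true, j) = (!(σ (false, j)).1, (σ (false, j)).2) := by
    intro j
    simpa using key false j
  set f : Fin (n + 1) → Fin (n + 1) := fun j => (σ (false, j)).2 with hf
  have hinj : Function.Injective f := by
    intro j j' h
    have h' : (σ (false, j)).2 = (σ (false, j')).2 := h
    by_cases hb : (σ (false, j)).1 = (σ (false, j')).1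
    · have he : σ (false, j) = σ (false, j') := Prod.ext hb h'
      exact (Prod.ext_iff.mp (σ.injective he)).2
    · have hb2 : (σ (false, j')).1 = !(σ (false, j)).1 := by
        rcases Bool.eq_false_or_eq_true (σ (false, j)).1 with h1 | h1 <;>
          rcases Bool.eq_false_or_eq_true (σ (false, j')).1 with h2 | h2 <;>
            first
              | exact absurd (h1.trans h2.symm) hb
              | (rw [h1, h2]; rfl)
      have he : σ (false, j') = σ (true, j) := by
        rw [keyT j]
        exact Prod.ext hb2 h'.symm
      have := σ.injective he
      simp at this
  have hbij : Function.Bijective f := Finite.injective_iff_bijective.mp hinj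
  set π : Equiv.Perm (Fin (n + 1)) := Equiv.ofBijective f hbij with hπ
  set u : Fin (n + 1) → Bool := fun m => (σ (false, π.symm m)).1 with hu
  have hπa : ∀ j, π j = (σ (false, j)).2 := fun j => rfl
  have hua : ∀ j, u (π j) = (σ (false, j)).1 := by
    intro j
    show (σ (false, π.symm (π j))).1 = _
    rw [Equiv.symm_apply_apply]
  have hdecomp : σ = Dperm n u * liftP n π := by
    apply Equiv.ext
    rintro ⟨b, j⟩
    rw [Equiv.Perm.mul_apply, liftP_apply, Dperm_apply]
    show σ (b, j) = (xor (u (π j)) b, π j)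
    rw [hua j, hπa j]
    cases b
    · rw [Bool.xor_false]
    · rw [Bool.xor_true, keyT j]
  rw [hdecomp]
  exact Subgroup.mul_mem _ (Dperm_mem u) (liftP_mem π)

lemma col_eq (u v : Bool × Fin (n + 1)) :
    twoStarsColoring n s(u, v) =
      if max u.2.val v.2.val = 0 then n + 1 else max u.2.val v.2.val := by
  simp [twoStarsColoring]

lemma isToggle_sgen (a : ℕ) (h1 : 1 ≤ a) (h2 : a ≤ n) :
    IsToggle (twoStars n) (twoStarsColoring n) a (sgen n ⟨a, by omega⟩) := by
  set i : Fin (n + 1) := ⟨a, by omega⟩ with hi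
  have hi0 : i ≠ 0 := by simp [hi, Fin.ext_iff]; omega
  intro v w hvw
  obtain ⟨b, j⟩ := v; obtain ⟨c, k⟩ := w
  rw [sgen_apply]
  constructor
  · intro h
    have hb : b = c := congrArg Prod.fst h
    have hk : Equiv.swap 0 i j = k := congrArg Prod.snd h
    subst hb
    by_cases hj : j = 0
    · subst hj
      rw [Equiv.swap_apply_left] at hk
      subst hk
      refine ⟨?_, ?_⟩
      · rw [twoStars, SimpleGraph.fromRel_adj]
        exact ⟨by simp [Ne.symm hi0], Or.inl (Or.inl ⟨rfl, hi0, rfl⟩)⟩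
      · rw [col_eq]; simp [hi]; omega
    · by_cases hji : j = i
      · subst hji
        rw [Equiv.swap_apply_right] at hk
        subst hk
        refine ⟨?_, ?_⟩
        · rw [twoStars, SimpleGraph.fromRel_adj]
          exact ⟨by simp [hi0], Or.inr (Or.inl ⟨rfl, hi0, rfl⟩)⟩
        · rw [col_eq]; simp [hi]; omega
      · rw [Equiv.swap_apply_of_ne_of_ne hj hji] at hk
        exact absurd (by rw [hk]) hvw
  · rintro ⟨hadj, hcol⟩
    rw [twoStars, SimpleGraph.fromRel_adj] at hadj
    rw [col_eq] at hcol
    obtain ⟨hne, hr⟩ := hadj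
    have hkn : k.val ≤ n := by omega
    have hjn : j.val ≤ n := by omega
    rcases hr with (⟨hj0, hk0, hbc⟩ | ⟨hj0, hk0, hbc⟩) | (⟨hk0, hj0, hcb⟩ | ⟨hk0, hj0, hcb⟩)
    · -- j = 0, k ≠ 0, b = c
      simp only at hj0 hk0 hbc
      subst hj0
      have hk0' : k.val ≠ 0 := by intro h; apply hk0; ext; simp [h]
      rw [if_neg (by simpa using hk0')] at hcol
      have hka : k.val = a := by simpa using hcol
      have : k = i := by rw [hi]; exact Fin.ext (by simpa using hka)
      subst this
      rw [Equiv.swap_apply_left, hbc]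
    · -- j = 0, k = 0, b ≠ c : central edge, color n+1 ≠ a
      simp only at hj0 hk0
      subst hj0; subst hk0
      simp at hcol
      omega
    · -- k = 0, j ≠ 0, c = b
      simp only at hj0 hk0 hcb
      subst hk0
      have hj0' : j.val ≠ 0 := by intro h; apply hj0; ext; simp [h]
      rw [if_neg (by simpa using hj0')] at hcol
      have hja : j.val = a := by simpa using hcol
      have : j = i := by rw [hi]; exact Fin.ext (by simpa using hja)
      subst this
      rw [Equiv.swap_apply_right, hcb]
    · simp only at hj0 hk0
      subst hj0; subst hk0
      simp at hcol
      omega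

lemma isToggle_cgen : IsToggle (twoStars n) (twoStarsColoring n) (n + 1) (cgen n) := by
  intro v w hvw
  obtain ⟨b, j⟩ := v; obtain ⟨c, k⟩ := w
  rw [show cgen n = sflip n 0 from rfl, sflip_apply]
  constructor
  · intro h
    by_cases hj : j = 0
    · subst hj
      rw [if_pos rfl] at h
      obtain ⟨hc, hk⟩ := Prod.ext_iff.mp h
      subst hc; subst hk
      refine ⟨?_, ?_⟩
      · rw [twoStars, SimpleGraph.fromRel_adj]
        refine ⟨by simp, Or.inl (Or.inr ⟨rfl, rfl, by cases b <;> simp⟩)⟩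
      · rw [col_eq]; simp
    · rw [if_neg hj] at h
      exact absurd h hvw
  · rintro ⟨hadj, hcol⟩
    rw [twoStars, SimpleGraph.fromRel_adj] at hadj
    rw [col_eq] at hcol
    obtain ⟨hne, hr⟩ := hadj
    have hkn : k.val ≤ n := by omega
    have hjn : j.val ≤ n := by omega
    rcases hr with (⟨hj0, hk0, hbc⟩ | ⟨hj0, hk0, hbc⟩) | (⟨hk0, hj0, hcb⟩ | ⟨hk0, hj0, hcb⟩)
    · subst hj0
      have hk0' : k.val ≠ 0 := by intro h; apply hk0; ext; simp [h]
      rw [if_neg (by simpa using hk0')] at hcol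
      simp at hcol
      omega
    · subst hj0; subst hk0
      rw [if_pos rfl]
      have : c = !b := by cases b <;> cases c <;> simp_all
      simp [this]
    · subst hk0
      have hj0' : j.val ≠ 0 := by intro h; apply hj0; ext; simp [h]
      rw [if_neg (by simpa using hj0')] at hcol
      simp at hcol
      omega
    · subst hj0; subst hk0
      rw [if_pos rfl]
      have : c = !b := by cases b <;> cases c <;> simp_all
      simp [this]

lemma toggle_unique {V : Type*} {G : SimpleGraph V} {κ : Sym2 V → ℕ} {a : ℕ}
    {τ τ' : Equiv.Perm V} (h : IsToggle G κ a τ) (h' : IsToggle G κ a τ') : τ = τ' := by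
  apply Equiv.ext; intro v
  by_cases hv : τ v = v
  · by_cases hv' : τ' v = v
    · rw [hv, hv']
    · exfalso
      have h1 := (h' v (τ' v) (Ne.symm hv')).mp rfl
      have h2 := (h v (τ' v) (Ne.symm hv')).mpr h1
      exact hv' (h2 ▸ hv)
  · have h1 := (h v (τ v) (Ne.symm hv)).mp rfl
    exact ((h' v (τ v) (Ne.symm hv)).mpr h1).symm

lemma gensSet_eq :
    {τ : Equiv.Perm (Bool × Fin (n + 1)) |
      ∃ a : ℕ, 1 ≤ a ∧ a ≤ n + 1 ∧ IsToggle (twoStars n) (twoStarsColoring n) a τ}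
    = gens n := by
  ext τ
  constructor
  · rintro ⟨a, ha1, ha2, ht⟩
    by_cases h : a ≤ n
    · exact Or.inl ⟨⟨a, by omega⟩, by simp [Fin.ext_iff]; omega,
        toggle_unique ht (isToggle_sgen a ha1 h)⟩
    · have : a = n + 1 := by omega
      subst this
      exact Or.inr (toggle_unique ht isToggle_cgen)
  · rintro (⟨i, hi, rfl⟩ | h)
    · have h1 : 1 ≤ i.val := by
        have : i.val ≠ 0 := by intro h; apply hi; ext; simp [h]
        omega
      have h2 : i.val ≤ n := by omega
      refine ⟨i.val, h1, by omega, ?_⟩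
      have := isToggle_sgen (n := n) i.val h1 h2
      rwa [Fin.eta] at this
    · rw [Set.mem_singleton_iff] at h; subst h
      exact ⟨n + 1, by omega, le_refl _, isToggle_cgen⟩

lemma colG_eq :
    coloringGroup (twoStars n) (n + 1) (twoStarsColoring n)
      = Subgroup.centralizer {flipP n} := by
  rw [coloringGroup, gensSet_eq]
  apply le_antisymm
  · rw [Subgroup.closure_le]
    exact gens_subset_centralizer
  · exact centralizer_le_closure

lemma E_flip :
    permMulEquiv (Equiv.prodComm Bool (Fin (n + 1))) (flipP n) = negPerm (n + 1) := by
  apply Equiv.ext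
  rintro ⟨i, b⟩
  rfl

end Stmt19

/-- For `n ≥ 1`, the coloring group of the tree made of two stars with
`n` leaves each, edges paired up by colors `1, …, n` and centers joined by an edge of
color `n + 1`, is isomorphic to the hyperoctahedral group `C₂ ≀ S_{n+1}` of signed
permutations of `n + 1` letters (realized as the centralizer of the sign-flip involution
in `Sym(Fin (n+1) × Bool)`), a group of order `2^{n+1} · (n+1)!`. -/
theorem stmt_19 (n : ℕ) (hn : 1 ≤ n) :
    Nonempty
      (↥(coloringGroup (twoStars n) (n + 1) (twoStarsColoring n)) ≃*
        ↥(Subgroup.centralizer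
            ({negPerm (n + 1)} : Set (Equiv.Perm (Fin (n + 1) × Bool))))) := by
  set E := Stmt19.permMulEquiv (Equiv.prodComm Bool (Fin (n + 1))) with hE
  have hmap : (coloringGroup (twoStars n) (n + 1) (twoStarsColoring n)).map
      (E : Equiv.Perm (Bool × Fin (n + 1)) →* Equiv.Perm (Fin (n + 1) × Bool))
      = Subgroup.centralizer {negPerm (n + 1)} := by
    rw [Stmt19.colG_eq]
    have hEf : E (Stmt19.flipP n) = negPerm (n + 1) := by
      rw [hE]; exact Stmt19.E_flip
    ext x
    simp only [Subgroup.mem_map]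
    constructor
    · rintro ⟨y, hy, rfl⟩
      rw [Subgroup.mem_centralizer_singleton_iff] at hy ⊢
      rw [← hEf]
      show E y * E (Stmt19.flipP n) = E (Stmt19.flipP n) * E y
      rw [← map_mul, ← map_mul, hy]
    · intro hx
      refine ⟨E.symm x, ?_, by simp⟩
      rw [Subgroup.mem_centralizer_singleton_iff] at hx ⊢
      apply E.injective
      rw [map_mul, map_mul, E.apply_symm_apply, hEf, hx]
  exact ⟨(E.subgroupMap _).trans (MulEquiv.subgroupCongr hmap)⟩
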